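/- Let l, d be positive integers and C₀ ≥ 0, and let 1/2 < e⁻ ≤ e⁺ be real numbers. Let (α^k) be a sequence in M_{l×d}(ℂ), (β^k) a sequence in M_{l×d}(ℂ) with ‖β^k‖_F ≤ C₀ for all k, (e^k) a sequence of reals with e⁻ ≤ e^k ≤ e⁺, and (t_k) a sequence of nonnegative thresholds. Suppose for every k, α^{k+1} is obtained by applying entrywise hard thresholding at level t_k to the matrix (1 − 1/e^k)·α^k + (1/e^k)·β^k. Then the sequence (α^k) is bounded: there exists M such that ‖α^k‖_F ≤ M for all k. -/

import Mathlib

open Classical in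
/-- Boundedness of the coefficient iterates of the PALM algorithm: if
`α^{k+1}` is obtained by entrywise hard thresholding of
`(1 − 1/e^k)·α^k + (1/e^k)·β^k` with `1/2 < e⁻ ≤ e^k ≤ e⁺` and `‖β^k‖_F ≤ C₀`,
then the sequence `(α^k)` is bounded in Frobenius norm. -/
theorem palm_coefficients_bounded {l d : ℕ} (hl : 0 < l) (hd : 0 < d)
    (C₀ : ℝ) (hC₀ : 0 ≤ C₀) (em ep : ℝ) (hem : 1 / 2 < em) (hep : em ≤ ep)
    (α β : ℕ → Matrix (Fin l) (Fin d) ℂ)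
    (hβ : ∀ k, Real.sqrt (∑ s : Fin l, ∑ t : Fin d, ‖β k s t‖ ^ 2) ≤ C₀)
    (e : ℕ → ℝ) (he : ∀ k, em ≤ e k ∧ e k ≤ ep)
    (thr : ℕ → ℝ) (hthr : ∀ k, 0 ≤ thr k)
    (hupdate : ∀ k s t, α (k + 1) s t =
      if thr k <
          ‖(((1 - 1 / e k : ℝ) : ℂ) • α k + ((1 / e k : ℝ) : ℂ) • β k) s t‖
        then ((((1 - 1 / e k : ℝ) : ℂ) • α k + ((1 / e k : ℝ) : ℂ) • β k)) s t
        else 0) :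
    ∃ M : ℝ, ∀ k,
      Real.sqrt (∑ s : Fin l, ∑ t : Fin d, ‖α k s t‖ ^ 2) ≤ M := by
  have hem0 : (0:ℝ) < em := lt_trans (by norm_num) hem
  have hep0 : (0:ℝ) < ep := lt_of_lt_of_le hem0 hep
  -- embedding into EuclideanSpace
  set emb : Matrix (Fin l) (Fin d) ℂ → EuclideanSpace ℂ (Fin l × Fin d) :=
    fun A => (WithLp.equiv 2 _).symm (fun p : Fin l × Fin d => A p.1 p.2) with hembdef
  set f : Matrix (Fin l) (Fin d) ℂ → ℝ :=
    fun A => Real.sqrt (∑ s : Fin l, ∑ t : Fin d, ‖A s t‖ ^ 2) with hfdef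
  have hfnorm : ∀ A, f A = ‖emb A‖ := by
    intro A
    rw [hfdef, hembdef]
    simp only [EuclideanSpace.norm_eq, WithLp.equiv_symm_apply, PiLp.toLp_apply]
    rw [Fintype.sum_prod_type]
  have hemb_add : ∀ A B, emb (A + B) = emb A + emb B := by
    intro A B; rfl
  have hemb_smul : ∀ (c : ℂ) A, emb (c • A) = c • emb A := by
    intro c A; rfl
  set ρ : ℝ := max |1 - 1/em| |1 - 1/ep| with hρdef
  have hρ0 : 0 ≤ ρ := le_trans (abs_nonneg _) (le_max_left _ _)
  have hρ1 : ρ < 1 := by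
    rw [hρdef, max_lt_iff]
    constructor <;> rw [abs_lt] <;> constructor
    · have : 1/em < 2 := by
        rw [div_lt_iff₀ hem0]; linarith
      linarith
    · have : 0 < 1/em := by positivity
      linarith
    · have : 1/ep < 2 := by
        rw [div_lt_iff₀ hep0]
        have : 1/2 < ep := lt_of_lt_of_le hem hep
        linarith
      linarith
    · have : 0 < 1/ep := by positivity
      linarith
  have hcoef : ∀ k, |1 - 1 / e k| ≤ ρ := by
    intro k
    obtain ⟨h1, h2⟩ := he k
    have he0 : (0:ℝ) < e k := lt_of_lt_of_le hem0 h1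
    have hi1 : 1/ep ≤ 1/(e k) := one_div_le_one_div_of_le he0 h2
    have hi2 : 1/(e k) ≤ 1/em := one_div_le_one_div_of_le hem0 h1
    exact abs_le_max_abs_abs (by linarith) (by linarith)
  have hcoef2 : ∀ k, 1 / e k ≤ 2 := by
    intro k
    obtain ⟨h1, _⟩ := he k
    have he0 : (0:ℝ) < e k := lt_of_lt_of_le hem0 h1
    rw [div_le_iff₀ he0]
    linarith
  -- key recursive bound
  have key : ∀ k, f (α (k+1)) ≤ ρ * f (α k) + 2 * C₀ := by
    intro k
    set A := (((1 - 1 / e k : ℝ) : ℂ) • α k + ((1 / e k : ℝ) : ℂ) • β k) with hA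
    have step1 : f (α (k+1)) ≤ f A := by
      rw [hfdef]
      apply Real.sqrt_le_sqrt
      apply Finset.sum_le_sum
      intro s _
      apply Finset.sum_le_sum
      intro t _
      rw [hupdate k s t]
      split
      · exact le_rfl
      · simp
    have step2 : f A ≤ |1 - 1 / e k| * f (α k) + (1 / e k) * f (β k) := by
      rw [hfnorm, hfnorm, hfnorm, hA, hemb_add, hemb_smul, hemb_smul]
      calc ‖(((1 - 1 / e k : ℝ) : ℂ)) • emb (α k) + (((1 / e k : ℝ) : ℂ)) • emb (β k)‖
          ≤ ‖(((1 - 1 / e k : ℝ) : ℂ)) • emb (α k)‖ + ‖(((1 / e k : ℝ) : ℂ)) • emb (β k)‖ :=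
            norm_add_le _ _
        _ = |1 - 1 / e k| * ‖emb (α k)‖ + |1 / e k| * ‖emb (β k)‖ := by
            rw [norm_smul, norm_smul, Complex.norm_real, Complex.norm_real,
              Real.norm_eq_abs, Real.norm_eq_abs]
        _ = |1 - 1 / e k| * ‖emb (α k)‖ + (1 / e k) * ‖emb (β k)‖ := by
            have : (0:ℝ) ≤ 1 / e k :=
              le_of_lt (div_pos one_pos (lt_of_lt_of_le hem0 (he k).1))
            rw [abs_of_nonneg this]
    have hfβ : f (β k) ≤ C₀ := hβ k
    have hfα0 : 0 ≤ f (α k) := Real.sqrt_nonneg _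
    have hfβ0 : 0 ≤ f (β k) := Real.sqrt_nonneg _
    have h1 : |1 - 1 / e k| * f (α k) ≤ ρ * f (α k) :=
      mul_le_mul_of_nonneg_right (hcoef k) hfα0
    have h2 : (1 / e k) * f (β k) ≤ 2 * C₀ := by
      have h1ek : (0:ℝ) ≤ 1 / e k :=
        le_of_lt (div_pos one_pos (lt_of_lt_of_le hem0 (he k).1))
      calc (1 / e k) * f (β k) ≤ 2 * f (β k) :=
            mul_le_mul_of_nonneg_right (hcoef2 k) hfβ0
        _ ≤ 2 * C₀ := by linarith
    linarith
  -- conclusion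
  have hM2 : ρ * max (f (α 0)) (2 * C₀ / (1 - ρ)) + 2 * C₀
      ≤ max (f (α 0)) (2 * C₀ / (1 - ρ)) := by
    set M := max (f (α 0)) (2 * C₀ / (1 - ρ)) with hM
    have h1ρ : 0 < 1 - ρ := by linarith
    have hM0 : 2 * C₀ / (1 - ρ) ≤ M := le_max_right _ _
    have : 2 * C₀ ≤ (1 - ρ) * M := by
      rw [div_le_iff₀ h1ρ] at hM0
      linarith [hM0]
    nlinarith
  have hbound : ∀ k, f (α k) ≤ max (f (α 0)) (2 * C₀ / (1 - ρ)) := by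
    intro k
    induction k with
    | zero => exact le_max_left _ _
    | succ n ih =>
      calc f (α (n+1)) ≤ ρ * f (α n) + 2 * C₀ := key n
        _ ≤ ρ * max (f (α 0)) (2 * C₀ / (1 - ρ)) + 2 * C₀ := by
            have := mul_le_mul_of_nonneg_left ih hρ0
            linarith
        _ ≤ _ := hM2
  exact ⟨max (f (α 0)) (2 * C₀ / (1 - ρ)), hbound⟩
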